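/- arXiv:0712.0068 — 2 statements merged into one kernel-verified Lean document; each statement's English description precedes it below -/
import Mathlib

section
/- Let K be a field, S = K[x_1, ..., x_n] with n ≥ 2, and I ⊆ S a squarefree monomial ideal. For k ∈ {0, 1} let I_k ⊆ S' = K[x_1, ..., x_{n-1}] be the monomial ideal with I ∩ x_n^k S' = x_n^k I_k, and let I_k^c be the K-span of the monomials of S' not in I_k. Suppose I_0 = 0 (so I_0^c = S'), and I_1^c = ⊕_{j=1}^{r} v_j K[W_j] is a squarefree Stanley decomposition with W_j ⊆ {x_1, ..., x_{n-1}}. Then I^c = S' ⊕ (⊕_{j=1}^{r} v_j x_n K[W_j ∪ {x_n}]) is a squarefree Stanley decomposition of I^c. -/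
open MvPolynomial

/-- The Stanley space `u K[Z]`: the `K`-span of all monomials `u * v` where `v` is a
monomial in the variables of `Z`; the monomial `u` is given by its exponent vector `d`. -/
noncomputable def stanleySpace (K : Type*) [Field K] {σ : Type*} (d : σ →₀ ℕ)
    (Z : Finset σ) : Submodule K (MvPolynomial σ K) :=
  Submodule.span K
    {m | ∃ e : σ →₀ ℕ, (e.support : Set σ) ⊆ (Z : Set σ) ∧ m = monomial (d + e) (1 : K)}

/-- A monomial ideal: an ideal generated by monomials. -/
def IsMonomialIdeal {K : Type*} [Field K] {σ : Type*}
    (I : Ideal (MvPolynomial σ K)) : Prop :=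
  ∃ G : Set (σ →₀ ℕ), I = Ideal.span ((fun d => monomial d (1 : K)) '' G)

/-- A squarefree monomial ideal: an ideal generated by squarefree monomials. -/
def IsSquarefreeMonomialIdeal {K : Type*} [Field K] {σ : Type*}
    (I : Ideal (MvPolynomial σ K)) : Prop :=
  ∃ G : Set (σ →₀ ℕ), (∀ d ∈ G, ∀ i, d i ≤ 1) ∧
    I = Ideal.span ((fun d => monomial d (1 : K)) '' G)

/-- `I^c`: the `K`-span of all monomials not belonging to `I`. -/
noncomputable def compSpan (K : Type*) [Field K] {σ : Type*}
    (I : Ideal (MvPolynomial σ K)) : Submodule K (MvPolynomial σ K) :=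
  Submodule.span K
    {m | ∃ d : σ →₀ ℕ, monomial d (1 : K) ∉ I ∧ m = monomial d (1 : K)}

/-- `x_n^k V ⊆ S`: the image in `S = K[x_1,…,x_n]` of a `K`-subspace
`V ⊆ S' = K[x_1,…,x_{n-1}]` under inclusion followed by multiplication by `x_n^k`. -/
noncomputable def shiftUp (K : Type*) [Field K] (n : ℕ) (k : ℕ)
    (V : Submodule K (MvPolynomial (Fin n) K)) :
    Submodule K (MvPolynomial (Fin (n + 1)) K) :=
  (V.map (rename (Fin.castSucc : Fin n → Fin (n + 1)) :
      MvPolynomial (Fin n) K →ₐ[K] MvPolynomial (Fin (n + 1)) K).toLinearMap).map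
    (LinearMap.mulLeft K ((X (Fin.last n) : MvPolynomial (Fin (n + 1)) K) ^ k))

/-- The exponent vector of `u · x_{n+1}^k`, where `u` is a monomial of
`S' = K[x_1,…,x_n]` with exponent vector `d`. -/
noncomputable def shiftExp (n : ℕ) (k : ℕ) (d : Fin n →₀ ℕ) : Fin (n + 1) →₀ ℕ :=
  Finsupp.mapDomain (Fin.castSucc : Fin n → Fin (n + 1)) d + Finsupp.single (Fin.last n) k

namespace JanetAux

variable {K : Type*} [Field K] {σ : Type*}

/-- Set of monomials with exponents in `D`. -/
def MonSet (K : Type*) [Field K] {σ : Type*} (D : Set (σ →₀ ℕ)) : Set (MvPolynomial σ K) :=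
  {m | ∃ d ∈ D, m = monomial d (1:K)}

lemma mem_span_monSet {D : Set (σ →₀ ℕ)} {p : MvPolynomial σ K} :
    p ∈ Submodule.span K (MonSet K D) ↔ (p.support : Set (σ →₀ ℕ)) ⊆ D := by
  classical
  constructor
  · intro hp
    refine Submodule.span_induction ?_ ?_ ?_ ?_ hp
    · rintro m ⟨d, hd, rfl⟩
      intro e he
      have : e = d := Finset.mem_singleton.mp (MvPolynomial.support_monomial_subset he)
      rwa [this]
    · intro e he
      simp at he
    · intro a b _ _ ha hb
      intro e he
      rcases Finset.mem_union.mp (MvPolynomial.support_add he) with h | h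
      · exact ha h
      · exact hb h
    · intro c a _ ha
      intro e he
      exact ha (MvPolynomial.support_smul he)
  · intro hs
    rw [← MvPolynomial.support_sum_monomial_coeff p]
    refine Submodule.sum_mem _ fun d hd => ?_
    have : monomial d (coeff d p) = (coeff d p) • monomial d (1:K) := by
      simp [smul_monomial]
    rw [this]
    exact Submodule.smul_mem _ _ (Submodule.subset_span ⟨d, hs hd, rfl⟩)

lemma monomial_mem_span_monSet {D : Set (σ →₀ ℕ)} {d : σ →₀ ℕ} :
    monomial d (1:K) ∈ Submodule.span K (MonSet K D) ↔ d ∈ D := by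
  classical
  rw [mem_span_monSet]
  rw [support_monomial, if_neg one_ne_zero]
  simp

lemma monSet_eq_of_span_eq {D₁ D₂ : Set (σ →₀ ℕ)}
    (h : Submodule.span K (MonSet K D₁) = Submodule.span K (MonSet K D₂)) : D₁ = D₂ := by
  ext d
  rw [← @monomial_mem_span_monSet K _ σ D₁ d, ← @monomial_mem_span_monSet K _ σ D₂ d, h]

lemma monSet_iUnion {ι : Type*} (D : ι → Set (σ →₀ ℕ)) :
    MonSet K (⋃ i, D i) = ⋃ i, MonSet K (D i) := by
  ext m
  simp only [MonSet, Set.mem_setOf_eq, Set.mem_iUnion]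
  tauto

lemma iSup_span_monSet {ι : Type*} (D : ι → Set (σ →₀ ℕ)) :
    (⨆ i, Submodule.span K (MonSet K (D i))) = Submodule.span K (MonSet K (⋃ i, D i)) := by
  rw [monSet_iUnion, Submodule.span_iUnion]

lemma indep_of_pairwise_disjoint {ι : Type*} (D : ι → Set (σ →₀ ℕ))
    (h : Pairwise fun i j => ∀ d, d ∈ D i → d ∈ D j → False) :
    iSupIndep (fun i => Submodule.span K (MonSet K (D i))) := by
  intro i
  rw [Submodule.disjoint_def]
  intro p hp hp'
  have h1 : (p.support : Set (σ →₀ ℕ)) ⊆ D i := mem_span_monSet.mp hp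
  have h2 : (p.support : Set (σ →₀ ℕ)) ⊆ ⋃ j ∈ ({j | j ≠ i} : Set ι), D j := by
    have : (⨆ j, ⨆ (_ : j ≠ i), Submodule.span K (MonSet K (D j))) ≤
        Submodule.span K (MonSet K (⋃ j ∈ ({j | j ≠ i} : Set ι), D j)) := by
      refine iSup₂_le fun j hj => Submodule.span_mono ?_
      rintro m ⟨d, hd, rfl⟩
      exact ⟨d, Set.mem_biUnion hj hd, rfl⟩
    exact mem_span_monSet.mp (this hp')
  have : (p.support : Set (σ →₀ ℕ)) ⊆ (∅ : Set (σ →₀ ℕ)) := by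
    intro d hd
    have := h2 hd
    simp only [Set.mem_iUnion, Set.mem_setOf_eq, exists_prop] at this
    obtain ⟨j, hj, hdj⟩ := this
    exact absurd (h (Ne.symm hj) d (h1 hd) hdj) not_false
  have : p.support = ∅ := by
    simpa using this
  simpa [MvPolynomial.support_eq_empty] using this

lemma pairwise_disjoint_of_indep {ι : Type*} (D : ι → Set (σ →₀ ℕ))
    (h : iSupIndep (fun i => Submodule.span K (MonSet K (D i)))) :
    Pairwise fun i j => ∀ d, d ∈ D i → d ∈ D j → False := by
  intro i j hij d hdi hdj
  have h1 : monomial d (1:K) ∈ Submodule.span K (MonSet K (D i)) :=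
    monomial_mem_span_monSet.mpr hdi
  have h2 : monomial d (1:K) ∈ ⨆ k, ⨆ (_ : k ≠ i), Submodule.span K (MonSet K (D k)) := by
    refine (le_iSup₂ (f := fun k (_ : k ≠ i) => Submodule.span K (MonSet K (D k))) j
      (Ne.symm hij)) ?_
    exact monomial_mem_span_monSet.mpr hdj
  have := (h i).le_bot ⟨h1, h2⟩
  simp at this

section FinStuff
open Finsupp Fin


variable {n : ℕ}

noncomputable def chop (e : Fin (n+1) →₀ ℕ) : Fin n →₀ ℕ :=
  Finsupp.comapDomain Fin.castSucc e ((Fin.castSucc_injective n).injOn)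

lemma chop_apply (e : Fin (n+1) →₀ ℕ) (i : Fin n) : chop e i = e (castSucc i) := rfl

lemma last_not_mem_range : Fin.last n ∉ Set.range (castSucc : Fin n → Fin (n+1)) := by
  rintro ⟨i, hi⟩
  exact absurd hi (Fin.castSucc_lt_last i).ne

lemma shiftExp_apply_castSucc (k : ℕ) (d : Fin n →₀ ℕ) (i : Fin n) :
    shiftExp n k d (castSucc i) = d i := by
  simp only [shiftExp, Finsupp.add_apply,
    Finsupp.mapDomain_apply (Fin.castSucc_injective n)]
  rw [Finsupp.single_apply, if_neg (Fin.castSucc_lt_last i).ne', add_zero]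

lemma shiftExp_apply_last (k : ℕ) (d : Fin n →₀ ℕ) :
    shiftExp n k d (last n) = k := by
  simp only [shiftExp, Finsupp.add_apply,
    Finsupp.mapDomain_notin_range _ _ last_not_mem_range]
  rw [Finsupp.single_apply, if_pos rfl, zero_add]

lemma eq_shiftExp (e : Fin (n+1) →₀ ℕ) : e = shiftExp n (e (last n)) (chop e) := by
  ext i
  induction i using Fin.lastCases with
  | last => rw [shiftExp_apply_last]
  | cast i => rw [shiftExp_apply_castSucc, chop_apply]

lemma chop_shiftExp (k : ℕ) (d : Fin n →₀ ℕ) : chop (shiftExp n k d) = d := by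
  ext i
  rw [chop_apply, shiftExp_apply_castSucc]

lemma shiftExp_inj {k k' : ℕ} {d d' : Fin n →₀ ℕ}
    (h : shiftExp n k d = shiftExp n k' d') : k = k' ∧ d = d' := by
  constructor
  · have := congrArg (fun f => f (last n)) h
    simpa [shiftExp_apply_last] using this
  · have := congrArg chop h
    rwa [chop_shiftExp, chop_shiftExp] at this

end FinStuff

section ShiftUpStuff
open Finsupp Fin

variable {K : Type*} [Field K] {n : ℕ}

lemma mem_shiftUp {k : ℕ} {V : Submodule K (MvPolynomial (Fin n) K)}
    {q : MvPolynomial (Fin (n+1)) K} :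
    q ∈ shiftUp K n k V ↔ ∃ p ∈ V, q = (X (Fin.last n) : MvPolynomial (Fin (n+1)) K) ^ k *
      rename (Fin.castSucc : Fin n → Fin (n+1)) p := by
  simp only [shiftUp, Submodule.mem_map]
  constructor
  · rintro ⟨y, ⟨p, hp, rfl⟩, rfl⟩
    exact ⟨p, hp, rfl⟩
  · rintro ⟨p, hp, rfl⟩
    exact ⟨rename Fin.castSucc p, ⟨p, hp, rfl⟩, rfl⟩

lemma X_pow_mul_rename_monomial (k : ℕ) (d : Fin n →₀ ℕ) :
    (X (Fin.last n) : MvPolynomial (Fin (n+1)) K) ^ k *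
      rename (Fin.castSucc : Fin n → Fin (n+1)) (monomial d (1:K)) =
    monomial (shiftExp n k d) (1:K) := by
  rw [rename_monomial, X_pow_eq_monomial, monomial_mul, one_mul, shiftExp]
  exact congrFun (congrArg _ (congrArg _ (add_comm _ _))) _

lemma monomial_shiftExp_mem_shiftUp_iff {k : ℕ} {V : Submodule K (MvPolynomial (Fin n) K)}
    {d : Fin n →₀ ℕ} :
    monomial (shiftExp n k d) (1:K) ∈ shiftUp K n k V ↔ monomial d (1:K) ∈ V := by
  rw [mem_shiftUp]
  constructor
  · rintro ⟨p, hp, heq⟩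
    have hx : ((X (Fin.last n) : MvPolynomial (Fin (n+1)) K) ^ k) ≠ 0 :=
      pow_ne_zero _ (X_ne_zero _)
    have : rename (Fin.castSucc : Fin n → Fin (n+1)) p
        = rename (Fin.castSucc : Fin n → Fin (n+1)) (monomial d (1:K)) := by
      apply mul_left_cancel₀ hx
      rw [← heq, X_pow_mul_rename_monomial]
    have hp' : p = monomial d (1:K) :=
      rename_injective _ (Fin.castSucc_injective n) this
    rwa [hp'] at hp
  · intro hd
    exact ⟨monomial d (1:K), hd, (X_pow_mul_rename_monomial k d).symm⟩

lemma stanleySpace_eq {σ : Type*} (d : σ →₀ ℕ) (Z : Finset σ) :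
    stanleySpace K d Z = Submodule.span K (MonSet K
      {f | ∃ e : σ →₀ ℕ, (e.support : Set σ) ⊆ (Z : Set σ) ∧ f = d + e}) := by
  unfold stanleySpace
  congr 1
  ext m
  constructor
  · rintro ⟨e, he, rfl⟩
    exact ⟨d + e, ⟨e, he, rfl⟩, rfl⟩
  · rintro ⟨f, ⟨e, he, rfl⟩, rfl⟩
    exact ⟨e, he, rfl⟩

lemma compSpan_eq {σ : Type*} (I : Ideal (MvPolynomial σ K)) :
    compSpan K I = Submodule.span K (MonSet K {d | monomial d (1:K) ∉ I}) := by
  unfold compSpan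
  rfl

end ShiftUpStuff

section ExpSets
open Finsupp Fin

variable {K : Type*} [Field K] {n : ℕ}

/-- Exponent set of a Stanley space. -/
def expSet {σ : Type*} (d : σ →₀ ℕ) (Z : Finset σ) : Set (σ →₀ ℕ) :=
  {f | ∃ e : σ →₀ ℕ, (e.support : Set σ) ⊆ (Z : Set σ) ∧ f = d + e}

lemma stanleySpace_eq' {σ : Type*} (d : σ →₀ ℕ) (Z : Finset σ) :
    stanleySpace K d Z = Submodule.span K (MonSet K (expSet d Z)) :=
  stanleySpace_eq d Z

lemma chop_add (a b : Fin (n+1) →₀ ℕ) : chop (a + b) = chop a + chop b := by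
  ext i
  simp [chop_apply]

lemma mem_expSet_zero (e : Fin (n+1) →₀ ℕ) :
    e ∈ expSet (0 : Fin (n+1) →₀ ℕ)
      ((Finset.univ : Finset (Fin n)).image Fin.castSucc) ↔ e (last n) = 0 := by
  constructor
  · rintro ⟨e', he', rfl⟩
    rw [Finsupp.add_apply, Finsupp.coe_zero, Pi.zero_apply, zero_add]
    by_contra h
    have hmem : last n ∈ e'.support := Finsupp.mem_support_iff.mpr h
    have := he' hmem
    simp only [Finset.coe_image, Set.mem_image, Finset.mem_coe] at this
    obtain ⟨i, -, hi⟩ := this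
    exact (Fin.castSucc_lt_last i).ne hi
  · intro h
    refine ⟨e, ?_, (zero_add e).symm⟩
    intro i hi
    have hne : i ≠ last n := by
      rintro rfl
      exact (Finsupp.mem_support_iff.mp hi) h
    obtain ⟨m, rfl⟩ := Fin.exists_castSucc_eq.mpr hne
    simp only [Finset.coe_image, Set.mem_image, Finset.mem_coe]
    exact ⟨m, Finset.mem_univ m, rfl⟩

lemma mem_expSet_shift (u : Fin n →₀ ℕ) (Wj : Finset (Fin n)) (e : Fin (n+1) →₀ ℕ) :
    e ∈ expSet (shiftExp n 1 u) (insert (last n) (Wj.image Fin.castSucc)) ↔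
      (1 ≤ e (last n) ∧ chop e ∈ expSet u Wj) := by
  constructor
  · rintro ⟨e', he', rfl⟩
    constructor
    · rw [Finsupp.add_apply, shiftExp_apply_last]
      exact Nat.le_add_right 1 _
    · refine ⟨chop e', ?_, by rw [chop_add, chop_shiftExp]⟩
      intro i hi
      have h1 : castSucc i ∈ e'.support := by
        rw [Finset.mem_coe, Finsupp.mem_support_iff] at hi
        rw [Finsupp.mem_support_iff]
        rwa [chop_apply] at hi
      have h2 := he' h1
      simp only [Finset.coe_insert, Set.mem_insert_iff, Finset.coe_image, Set.mem_image,
        Finset.mem_coe] at h2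
      rcases h2 with h2 | ⟨m, hm, hmi⟩
      · exact absurd h2 (Fin.castSucc_lt_last i).ne
      · rwa [← Fin.castSucc_injective n hmi]
  · rintro ⟨h1, f, hf, hchop⟩
    refine ⟨Finsupp.mapDomain Fin.castSucc f + Finsupp.single (last n) (e (last n) - 1),
      ?_, ?_⟩
    · intro i hi
      rw [Finset.mem_coe] at hi
      rcases Finset.mem_union.mp (Finsupp.support_add hi) with h | h
      · obtain ⟨m, hm, rfl⟩ := Finset.mem_image.mp (Finsupp.mapDomain_support h)
        simp only [Finset.coe_insert, Set.mem_insert_iff, Finset.coe_image, Set.mem_image,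
          Finset.mem_coe]
        exact Or.inr ⟨m, hf hm, rfl⟩
      · have := Finsupp.support_single_subset h
        rw [Finset.mem_singleton] at this
        rw [this]
        exact Finset.mem_coe.mpr (Finset.mem_insert_self _ _)
    · ext i
      induction i using Fin.lastCases with
      | last =>
        rw [Finsupp.add_apply, Finsupp.add_apply, shiftExp_apply_last,
          Finsupp.mapDomain_notin_range _ _ last_not_mem_range,
          Finsupp.single_apply, if_pos rfl]
        omega
      | cast i =>
        have hc : chop e i = u i + f i := by rw [hchop]; rfl
        rw [chop_apply] at hc
        rw [hc, Finsupp.add_apply, Finsupp.add_apply, shiftExp_apply_castSucc,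
          Finsupp.mapDomain_apply (Fin.castSucc_injective n),
          Finsupp.single_apply, if_neg (Fin.castSucc_lt_last i).ne', add_zero]

end ExpSets

end JanetAux

open JanetAux

/-- (Here `S = K[x_1,…,x_{n+1}]`, `S' = K[x_1,…,x_n]`, `n ≥ 1`.) Let
`I ⊆ S` be a squarefree monomial ideal with slices `I_0 = 0`, `I_1` (determined by
`I ∩ x_{n+1}^k S' = x_{n+1}^k I_k`), so `I_0^c = S'`. Given a squarefree Stanley
decomposition `I_1^c = ⊕_j v_j K[W_j]`, the decomposition
`I^c = S' ⊕ (⊕_j v_j x_{n+1} K[W_j ∪ {x_{n+1}}])` is a squarefree Stanley decomposition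
of `I^c`. Here `S' ⊆ S` is the squarefree Stanley space `1·K[{x_1,…,x_n}]`. -/
theorem janet_comp_squarefree_decomposition_case_alpha_beta_one
    (K : Type*) [Field K] (n : ℕ) (hn : 1 ≤ n)
    (I : Ideal (MvPolynomial (Fin (n + 1)) K)) (hI : IsSquarefreeMonomialIdeal I)
    (I0 I1 : Ideal (MvPolynomial (Fin n) K))
    (hI0 : Submodule.restrictScalars K I ⊓ shiftUp K n 0 ⊤ =
      shiftUp K n 0 (Submodule.restrictScalars K I0))
    (hI1 : Submodule.restrictScalars K I ⊓ shiftUp K n 1 ⊤ =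
      shiftUp K n 1 (Submodule.restrictScalars K I1))
    (h0 : I0 = ⊥)
    (r : ℕ) (v : Fin r → (Fin n →₀ ℕ)) (W : Fin r → Finset (Fin n))
    (hv : ∀ j, (∀ l, v j l ≤ 1) ∧ (v j).support ⊆ W j)
    (hdec1 : iSupIndep (fun j => stanleySpace K (v j) (W j)) ∧
      (⨆ j, stanleySpace K (v j) (W j)) = compSpan K I1) :
    (∀ j : Fin r, (∀ l, shiftExp n 1 (v j) l ≤ 1) ∧
      (shiftExp n 1 (v j)).support ⊆ insert (Fin.last n) ((W j).image Fin.castSucc)) ∧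
    iSupIndep (fun x : Unit ⊕ Fin r =>
      Sum.elim
        (fun _ : Unit => stanleySpace K (0 : Fin (n + 1) →₀ ℕ)
          ((Finset.univ : Finset (Fin n)).image Fin.castSucc))
        (fun j => stanleySpace K (shiftExp n 1 (v j))
          (insert (Fin.last n) ((W j).image Fin.castSucc))) x) ∧
    (⨆ x : Unit ⊕ Fin r,
      Sum.elim
        (fun _ : Unit => stanleySpace K (0 : Fin (n + 1) →₀ ℕ)
          ((Finset.univ : Finset (Fin n)).image Fin.castSucc))
        (fun j => stanleySpace K (shiftExp n 1 (v j))
          (insert (Fin.last n) ((W j).image Fin.castSucc))) x) = compSpan K I := by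
  classical
  obtain ⟨G, hG1, hGI⟩ := hI
  -- membership of a monomial in I
  have hmemI : ∀ e : Fin (n+1) →₀ ℕ,
      (monomial e (1:K) ∈ I ↔ ∃ s ∈ G, s ≤ e) := by
    intro e
    rw [hGI, MvPolynomial.mem_ideal_span_monomial_image]
    have hs : (monomial e (1:K)).support = {e} := by
      rw [support_monomial, if_neg one_ne_zero]
    rw [hs]
    simp
  have fact_sq : ∀ (k : ℕ), 1 ≤ k → ∀ d : Fin n →₀ ℕ,
      (monomial (shiftExp n k d) (1:K) ∈ I ↔ monomial (shiftExp n 1 d) (1:K) ∈ I) := by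
    intro k hk d
    rw [hmemI, hmemI]
    refine exists_congr fun s => and_congr_right fun hsG => ?_
    rw [Finsupp.le_def, Finsupp.le_def]
    constructor <;> intro hle i <;> have h := hle i
    · induction i using Fin.lastCases with
      | last => rw [shiftExp_apply_last]; exact hG1 s hsG _
      | cast i => rwa [shiftExp_apply_castSucc] at h ⊢
    · induction i using Fin.lastCases with
      | last =>
        rw [shiftExp_apply_last] at h ⊢
        omega
      | cast i => rwa [shiftExp_apply_castSucc] at h ⊢
  have hbot : shiftUp K n 0
      (Submodule.restrictScalars K (⊥ : Ideal (MvPolynomial (Fin n) K))) = ⊥ := by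
    unfold shiftUp
    rw [Submodule.restrictScalars_bot, Submodule.map_bot, Submodule.map_bot]
  have fact0 : ∀ d : Fin n →₀ ℕ, monomial (shiftExp n 0 d) (1:K) ∉ I := by
    intro d hd
    have h2 : monomial (shiftExp n 0 d) (1:K) ∈
        Submodule.restrictScalars K I ⊓ shiftUp K n 0 ⊤ :=
      ⟨hd, monomial_shiftExp_mem_shiftUp_iff.mpr Submodule.mem_top⟩
    rw [hI0, h0, hbot] at h2
    have := (Submodule.mem_bot K).mp h2
    simp [MvPolynomial.monomial_eq_zero] at this
  have fact1 : ∀ d : Fin n →₀ ℕ,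
      (monomial (shiftExp n 1 d) (1:K) ∈ I ↔ monomial d (1:K) ∈ I1) := by
    intro d
    constructor
    · intro hd
      have h2 : monomial (shiftExp n 1 d) (1:K) ∈
          Submodule.restrictScalars K I ⊓ shiftUp K n 1 ⊤ :=
        ⟨hd, monomial_shiftExp_mem_shiftUp_iff.mpr Submodule.mem_top⟩
      rw [hI1] at h2
      exact monomial_shiftExp_mem_shiftUp_iff.mp h2
    · intro hd
      have h2 : monomial (shiftExp n 1 d) (1:K) ∈
          shiftUp K n 1 (Submodule.restrictScalars K I1) :=
        monomial_shiftExp_mem_shiftUp_iff.mpr hd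
      rw [← hI1] at h2
      exact h2.1
  set D0 : Set (Fin (n+1) →₀ ℕ) :=
    expSet (0 : Fin (n+1) →₀ ℕ) ((Finset.univ : Finset (Fin n)).image Fin.castSucc)
    with hD0def
  set DB : Fin r → Set (Fin (n+1) →₀ ℕ) :=
    fun j => expSet (shiftExp n 1 (v j)) (insert (Fin.last n) ((W j).image Fin.castSucc))
    with hDBdef
  have hfun' : ∀ x : Unit ⊕ Fin r,
      Sum.elim
        (fun _ : Unit => stanleySpace K (0 : Fin (n + 1) →₀ ℕ)
          ((Finset.univ : Finset (Fin n)).image Fin.castSucc))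
        (fun j => stanleySpace K (shiftExp n 1 (v j))
          (insert (Fin.last n) ((W j).image Fin.castSucc))) x
      = Submodule.span K (MonSet K (Sum.elim (fun _ : Unit => D0) DB x)) := by
    intro x
    cases x with
    | inl u => exact stanleySpace_eq' _ _
    | inr j => exact stanleySpace_eq' _ _
  have hDWun : (⋃ j, expSet (v j) (W j)) = {d : Fin n →₀ ℕ | monomial d (1:K) ∉ I1} := by
    refine monSet_eq_of_span_eq (K := K) ?_
    calc Submodule.span K (MonSet K (⋃ j, expSet (v j) (W j)))
        = ⨆ j, Submodule.span K (MonSet K (expSet (v j) (W j))) := (iSup_span_monSet _).symm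
      _ = ⨆ j, stanleySpace K (v j) (W j) := iSup_congr fun j => (stanleySpace_eq' _ _).symm
      _ = compSpan K I1 := hdec1.2
      _ = _ := compSpan_eq _
  have hDWdisj : Pairwise fun i j =>
      ∀ d, d ∈ expSet (v i) (W i) → d ∈ expSet (v j) (W j) → False := by
    refine pairwise_disjoint_of_indep (K := K) _ ?_
    have h := hdec1.1
    have hfw : (fun j => stanleySpace K (v j) (W j))
        = fun j => Submodule.span K (MonSet K (expSet (v j) (W j))) :=
      funext fun j => stanleySpace_eq' _ _
    rwa [hfw] at h
  have hmain : (D0 ∪ ⋃ j, DB j) = {e : Fin (n+1) →₀ ℕ | monomial e (1:K) ∉ I} := by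
    ext e
    constructor
    · rintro (he | he)
      · have h0e := (mem_expSet_zero e).mp he
        have heq := eq_shiftExp e
        rw [h0e] at heq
        rw [Set.mem_setOf_eq, heq]
        exact fact0 _
      · rw [Set.mem_iUnion] at he
        obtain ⟨j, hj⟩ := he
        obtain ⟨h1e, hcj⟩ := (mem_expSet_shift _ _ _).mp hj
        have hnot1 : monomial (chop e) (1:K) ∉ I1 := by
          have hm : chop e ∈ ⋃ j, expSet (v j) (W j) := Set.mem_iUnion.mpr ⟨j, hcj⟩
          rw [hDWun] at hm
          exact hm
        rw [Set.mem_setOf_eq, eq_shiftExp e]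
        intro hmem
        exact hnot1 ((fact1 _).mp ((fact_sq _ h1e _).mp hmem))
    · intro he
      rw [Set.mem_setOf_eq] at he
      by_cases h0e : e (Fin.last n) = 0
      · exact Or.inl ((mem_expSet_zero e).mpr h0e)
      · have h1e : 1 ≤ e (Fin.last n) := Nat.one_le_iff_ne_zero.mpr h0e
        have hA : monomial (shiftExp n (e (Fin.last n)) (chop e)) (1:K) ∉ I := by
          rw [← eq_shiftExp]; exact he
        have hB : monomial (chop e) (1:K) ∉ I1 :=
          fun h => hA ((fact_sq _ h1e _).mpr ((fact1 _).mpr h))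
        have hm : chop e ∈ ⋃ j, expSet (v j) (W j) := by rw [hDWun]; exact hB
        rw [Set.mem_iUnion] at hm
        obtain ⟨j, hj⟩ := hm
        exact Or.inr (Set.mem_iUnion.mpr ⟨j, (mem_expSet_shift _ _ _).mpr ⟨h1e, hj⟩⟩)
  have hpair : Pairwise fun x y : Unit ⊕ Fin r =>
      ∀ d, d ∈ Sum.elim (fun _ : Unit => D0) DB x →
        d ∈ Sum.elim (fun _ : Unit => D0) DB y → False := by
    intro x y hxy d hdx hdy
    cases x with
    | inl u =>
      cases y with
      | inl u' => exact hxy (by cases u; cases u'; rfl)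
      | inr j =>
        have h0d := (mem_expSet_zero d).mp hdx
        have h1d := ((mem_expSet_shift _ _ _).mp hdy).1
        omega
    | inr i =>
      cases y with
      | inl u =>
        have h0d := (mem_expSet_zero d).mp hdy
        have h1d := ((mem_expSet_shift _ _ _).mp hdx).1
        omega
      | inr j =>
        have hij : i ≠ j := fun h => hxy (by rw [h])
        exact hDWdisj hij (chop d) ((mem_expSet_shift _ _ _).mp hdx).2
          ((mem_expSet_shift _ _ _).mp hdy).2
  have hfun : (fun x : Unit ⊕ Fin r =>
      Sum.elim
        (fun _ : Unit => stanleySpace K (0 : Fin (n + 1) →₀ ℕ)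
          ((Finset.univ : Finset (Fin n)).image Fin.castSucc))
        (fun j => stanleySpace K (shiftExp n 1 (v j))
          (insert (Fin.last n) ((W j).image Fin.castSucc))) x)
      = fun x => Submodule.span K (MonSet K (Sum.elim (fun _ : Unit => D0) DB x)) :=
    funext hfun'
  have hunion : (⋃ x : Unit ⊕ Fin r, Sum.elim (fun _ : Unit => D0) DB x)
      = D0 ∪ ⋃ j, DB j := by
    ext e
    rw [Set.mem_iUnion]
    constructor
    · rintro ⟨x, hx⟩
      cases x with
      | inl u => exact Or.inl hx
      | inr j => exact Or.inr (Set.mem_iUnion.mpr ⟨j, hx⟩)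
    · rintro (h | h)
      · exact ⟨Sum.inl (), h⟩
      · obtain ⟨j, hj⟩ := Set.mem_iUnion.mp h
        exact ⟨Sum.inr j, hj⟩
  refine ⟨?_, ?_, ?_⟩
  · intro j
    constructor
    · intro l
      induction l using Fin.lastCases with
      | last => rw [shiftExp_apply_last]
      | cast i =>
        rw [shiftExp_apply_castSucc]
        exact (hv j).1 i
    · intro l hl
      induction l using Fin.lastCases with
      | last => exact Finset.mem_insert_self _ _
      | cast i =>
        refine Finset.mem_insert_of_mem (Finset.mem_image.mpr ⟨i, ?_, rfl⟩)
        apply (hv j).2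
        rw [Finsupp.mem_support_iff] at hl ⊢
        rwa [shiftExp_apply_castSucc] at hl
  · rw [hfun]
    exact indep_of_pairwise_disjoint _ hpair
  · rw [hfun, iSup_span_monSet, hunion, hmain, ← compSpan_eq]
end

section
/- Let K be a field, S = K[x_1, ..., x_n] with n ≥ 2, and I ⊆ S a squarefree monomial ideal. For k ∈ {0, 1} let I_k ⊆ S' = K[x_1, ..., x_{n-1}] be the monomial ideal with I ∩ x_n^k S' = x_n^k I_k, and let I_k^c be the K-span of the monomials of S' not in I_k. If I_0 = I_1 and I_0^c = ⊕_{i=1}^{r} u_i K[Z_i] is a squarefree Stanley decomposition with Z_i ⊆ {x_1, ..., x_{n-1}}, then I^c = ⊕_{i=1}^{r} u_i K[Z_i ∪ {x_n}] is a squarefree Stanley decomposition of I^c. -/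
open MvPolynomial

/-- The exponent vector of a monomial of `S' = K[x_1,…,x_n]` viewed in
`S = K[x_1,…,x_{n+1}]`. -/
noncomputable def liftExp (n : ℕ) (d : Fin n →₀ ℕ) : Fin (n + 1) →₀ ℕ :=
  Finsupp.mapDomain (Fin.castSucc : Fin n → Fin (n + 1)) d


section Aux

open Finsupp

noncomputable def trunc (n : ℕ) (d : Fin (n+1) →₀ ℕ) : Fin n →₀ ℕ :=
  Finsupp.comapDomain Fin.castSucc d ((Fin.castSucc_injective n).injOn)

lemma trunc_apply (n : ℕ) (d : Fin (n+1) →₀ ℕ) (j : Fin n) :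
    trunc n d j = d j.castSucc := rfl

lemma liftExp_castSucc (n : ℕ) (d : Fin n →₀ ℕ) (j : Fin n) :
    liftExp n d j.castSucc = d j :=
  Finsupp.mapDomain_apply (Fin.castSucc_injective n) d j

lemma last_not_range (n : ℕ) :
    Fin.last n ∉ Set.range (Fin.castSucc : Fin n → Fin (n+1)) := by
  rintro ⟨i, hi⟩
  exact absurd hi (ne_of_lt (Fin.castSucc_lt_last i))

lemma liftExp_last (n : ℕ) (d : Fin n →₀ ℕ) : liftExp n d (Fin.last n) = 0 :=
  Finsupp.mapDomain_notin_range d _ (last_not_range n)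

lemma trunc_liftExp (n : ℕ) (d : Fin n →₀ ℕ) : trunc n (liftExp n d) = d := by
  ext j; rw [trunc_apply, liftExp_castSucc]

lemma lift_trunc (n : ℕ) (d : Fin (n+1) →₀ ℕ) :
    liftExp n (trunc n d) + Finsupp.single (Fin.last n) (d (Fin.last n)) = d := by
  ext j
  induction j using Fin.lastCases with
  | last => simp [liftExp_last]
  | cast i =>
      rw [Finsupp.add_apply, liftExp_castSucc, trunc_apply,
        Finsupp.single_eq_of_ne'
          (fun h => absurd h.symm (ne_of_lt (Fin.castSucc_lt_last i))), add_zero]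

lemma trunc_add (n : ℕ) (a b : Fin (n+1) →₀ ℕ) :
    trunc n (a+b) = trunc n a + trunc n b := by
  ext j; simp [trunc_apply]

lemma liftExp_add (n : ℕ) (a b : Fin n →₀ ℕ) :
    liftExp n (a+b) = liftExp n a + liftExp n b :=
  Finsupp.mapDomain_add

lemma monomial_mem_span_iff {K : Type*} [Field K] {σ : Type*}
    (T : Set (σ →₀ ℕ)) (m : σ →₀ ℕ) :
    monomial m (1:K) ∈ Submodule.span K ((fun d => monomial d (1:K)) '' T) ↔ m ∈ T := by
  classical
  constructor
  · intro h
    by_contra hm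
    have hle : Submodule.span K ((fun d => monomial d (1:K)) '' T) ≤
        LinearMap.ker (lcoeff K m) := by
      rw [Submodule.span_le]
      rintro _ ⟨d, hd, rfl⟩
      simp only [SetLike.mem_coe, LinearMap.mem_ker, lcoeff_apply, coeff_monomial]
      rw [if_neg]
      rintro rfl; exact hm hd
    have := hle h
    simp [lcoeff_apply, coeff_monomial] at this
  · intro h
    exact Submodule.subset_span ⟨m, h, rfl⟩

lemma stanleySpace_eq (K : Type*) [Field K] {σ : Type*} (d : σ →₀ ℕ) (Z : Finset σ) :
    stanleySpace K d Z = Submodule.span K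
      ((fun d' => monomial d' (1:K)) ''
        {d' | ∃ e : σ →₀ ℕ, (e.support : Set σ) ⊆ (Z : Set σ) ∧ d' = d + e}) := by
  unfold stanleySpace
  congr 1
  ext m
  constructor
  · rintro ⟨e, he, rfl⟩
    exact ⟨d + e, ⟨e, he, rfl⟩, rfl⟩
  · rintro ⟨d', ⟨e, he, rfl⟩, rfl⟩
    exact ⟨e, he, rfl⟩

lemma compSpan_eq (K : Type*) [Field K] {σ : Type*} (I : Ideal (MvPolynomial σ K)) :
    compSpan K I = Submodule.span K
      ((fun d => monomial d (1:K)) '' {d | monomial d (1:K) ∉ I}) := by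
  unfold compSpan
  congr 1
  ext m
  constructor
  · rintro ⟨d, hd, rfl⟩
    exact ⟨d, hd, rfl⟩
  · rintro ⟨d, hd, rfl⟩
    exact ⟨d, hd, rfl⟩

lemma mem_slice {K : Type*} [Field K] (n k : ℕ)
    (I : Ideal (MvPolynomial (Fin (n+1)) K)) (Ik : Ideal (MvPolynomial (Fin n) K))
    (h : Submodule.restrictScalars K I ⊓ shiftUp K n k ⊤ =
      shiftUp K n k (Submodule.restrictScalars K Ik))
    (p : MvPolynomial (Fin n) K) :
    (X (Fin.last n) : MvPolynomial (Fin (n+1)) K)^k * rename Fin.castSucc p ∈ I ↔ p ∈ Ik := by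
  constructor
  · intro hp
    have hmem : (X (Fin.last n) : MvPolynomial (Fin (n+1)) K)^k * rename Fin.castSucc p ∈
        Submodule.restrictScalars K I ⊓ shiftUp K n k ⊤ :=
      ⟨hp, ⟨rename Fin.castSucc p, ⟨p, trivial, rfl⟩, rfl⟩⟩
    rw [h] at hmem
    obtain ⟨y, ⟨q, hq, rfl⟩, hq2⟩ := hmem
    have hX : (X (Fin.last n) : MvPolynomial (Fin (n+1)) K)^k ≠ 0 :=
      pow_ne_zero _ (X_ne_zero _)
    have h1 : (rename (Fin.castSucc : Fin n → Fin (n+1))) q = rename Fin.castSucc p :=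
      mul_left_cancel₀ hX hq2
    have h2 := rename_injective (Fin.castSucc : Fin n → Fin (n+1))
      (Fin.castSucc_injective n) h1
    rwa [← h2]
  · intro hp
    have hmem : (X (Fin.last n) : MvPolynomial (Fin (n+1)) K)^k * rename Fin.castSucc p ∈
        shiftUp K n k (Submodule.restrictScalars K Ik) :=
      ⟨rename Fin.castSucc p, ⟨p, hp, rfl⟩, rfl⟩
    rw [← h] at hmem
    exact hmem.1

lemma monomial_split {K : Type*} [Field K] (n : ℕ) (d' : Fin n →₀ ℕ) (k : ℕ) :
    (monomial (liftExp n d' + Finsupp.single (Fin.last n) k) (1:K)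
        : MvPolynomial (Fin (n+1)) K) =
      (X (Fin.last n) : MvPolynomial (Fin (n+1)) K)^k *
        rename Fin.castSucc (monomial d' (1:K)) := by
  have h : liftExp n d' + Finsupp.single (Fin.last n) k
      = Finsupp.single (Fin.last n) k + Finsupp.mapDomain Fin.castSucc d' := add_comm _ _
  rw [rename_monomial, X_pow_eq_monomial, monomial_mul, one_mul, h]

lemma mem_iff_trunc_mem {K : Type*} [Field K] (n : ℕ)
    (I : Ideal (MvPolynomial (Fin (n+1)) K))
    (G : Set (Fin (n+1) →₀ ℕ)) (hG1 : ∀ g ∈ G, ∀ i, g i ≤ 1)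
    (hGI : I = Ideal.span ((fun d => monomial d (1:K)) '' G))
    (I0 I1 : Ideal (MvPolynomial (Fin n) K))
    (hI0 : Submodule.restrictScalars K I ⊓ shiftUp K n 0 ⊤ =
      shiftUp K n 0 (Submodule.restrictScalars K I0))
    (hI1 : Submodule.restrictScalars K I ⊓ shiftUp K n 1 ⊤ =
      shiftUp K n 1 (Submodule.restrictScalars K I1))
    (heq : I0 = I1) (d : Fin (n+1) →₀ ℕ) :
    monomial d (1:K) ∈ I ↔ monomial (trunc n d) (1:K) ∈ I0 := by
  classical
  have crit : ∀ c : Fin (n+1) →₀ ℕ, monomial c (1:K) ∈ I ↔ ∃ g ∈ G, g ≤ c := by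
    intro c
    rw [hGI, mem_ideal_span_monomial_image]
    rw [support_monomial, if_neg (one_ne_zero)]
    simp
  set k : ℕ := min (d (Fin.last n)) 1 with hk
  set dmin : Fin (n+1) →₀ ℕ := liftExp n (trunc n d) + Finsupp.single (Fin.last n) k with hdmin
  have step1 : monomial d (1:K) ∈ I ↔ monomial dmin (1:K) ∈ I := by
    rw [crit, crit]
    apply exists_congr; intro g
    apply and_congr_right; intro hg
    have hglast := hG1 g hg (Fin.last n)
    constructor
    · intro hle
      intro j
      induction j using Fin.lastCases with
      | last =>
          have := hle (Fin.last n)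
          simp only [hdmin, Finsupp.add_apply, liftExp_last, Finsupp.single_eq_same, zero_add]
          omega
      | cast i =>
          have := hle i.castSucc
          have hd2 : dmin i.castSucc = d i.castSucc := by
            rw [hdmin, Finsupp.add_apply, liftExp_castSucc, trunc_apply,
              Finsupp.single_eq_of_ne'
                (fun h => absurd h.symm (ne_of_lt (Fin.castSucc_lt_last i))), add_zero]
          omega
    · intro hle
      intro j
      induction j using Fin.lastCases with
      | last =>
          have := hle (Fin.last n)
          simp only [hdmin, Finsupp.add_apply, liftExp_last, Finsupp.single_eq_same,
            zero_add] at this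
          omega
      | cast i =>
          have := hle i.castSucc
          have hd2 : dmin i.castSucc = d i.castSucc := by
            rw [hdmin, Finsupp.add_apply, liftExp_castSucc, trunc_apply,
              Finsupp.single_eq_of_ne'
                (fun h => absurd h.symm (ne_of_lt (Fin.castSucc_lt_last i))), add_zero]
          omega
    
  rw [step1, hdmin, monomial_split]
  rcases Nat.eq_zero_or_pos (d (Fin.last n)) with h0 | h1
  · have : k = 0 := by omega
    rw [this]
    exact mem_slice n 0 I I0 hI0 _
  · have : k = 1 := by omega
    rw [this, heq]
    exact mem_slice n 1 I I1 hI1 _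

end Aux

/-- (Here `S = K[x_1,…,x_{n+1}]`, `S' = K[x_1,…,x_n]`, `n ≥ 1`.) Let
`I ⊆ S` be a squarefree monomial ideal with equal slices `I_0 = I_1` (determined by
`I ∩ x_{n+1}^k S' = x_{n+1}^k I_k`). Given a squarefree Stanley decomposition
`I_0^c = ⊕_i u_i K[Z_i]`, the decomposition `I^c = ⊕_i u_i K[Z_i ∪ {x_{n+1}}]` is a
squarefree Stanley decomposition of `I^c`. -/
theorem janet_comp_squarefree_decomposition_equal_slices
    (K : Type*) [Field K] (n : ℕ) (hn : 1 ≤ n)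
    (I : Ideal (MvPolynomial (Fin (n + 1)) K)) (hI : IsSquarefreeMonomialIdeal I)
    (I0 I1 : Ideal (MvPolynomial (Fin n) K))
    (hI0 : Submodule.restrictScalars K I ⊓ shiftUp K n 0 ⊤ =
      shiftUp K n 0 (Submodule.restrictScalars K I0))
    (hI1 : Submodule.restrictScalars K I ⊓ shiftUp K n 1 ⊤ =
      shiftUp K n 1 (Submodule.restrictScalars K I1))
    (heq : I0 = I1)
    (r : ℕ) (u : Fin r → (Fin n →₀ ℕ)) (Z : Fin r → Finset (Fin n))
    (hu : ∀ i, (∀ j, u i j ≤ 1) ∧ (u i).support ⊆ Z i)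
    (hdec0 : iSupIndep (fun i => stanleySpace K (u i) (Z i)) ∧
      (⨆ i, stanleySpace K (u i) (Z i)) = compSpan K I0) :
    (∀ i : Fin r, (∀ j, liftExp n (u i) j ≤ 1) ∧
      (liftExp n (u i)).support ⊆ insert (Fin.last n) ((Z i).image Fin.castSucc)) ∧
    iSupIndep (fun i : Fin r =>
      stanleySpace K (liftExp n (u i)) (insert (Fin.last n) ((Z i).image Fin.castSucc))) ∧
    (⨆ i : Fin r,
      stanleySpace K (liftExp n (u i)) (insert (Fin.last n) ((Z i).image Fin.castSucc))) =
      compSpan K I := by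
  classical
  obtain ⟨G, hG1, hGI⟩ := hI
  have L : ∀ d : Fin (n+1) →₀ ℕ, monomial d (1:K) ∈ I ↔ monomial (trunc n d) (1:K) ∈ I0 :=
    mem_iff_trunc_mem n I G hG1 hGI I0 I1 hI0 hI1 heq
  set a : Fin r → Set (Fin n →₀ ℕ) := fun i =>
    {d' | ∃ e : Fin n →₀ ℕ, (e.support : Set (Fin n)) ⊆ (Z i : Set (Fin n)) ∧ d' = u i + e}
    with ha
  set A : Fin r → Set (Fin (n+1) →₀ ℕ) := fun i =>
    {d | ∃ e : Fin (n+1) →₀ ℕ,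
      (e.support : Set (Fin (n+1))) ⊆
        ((insert (Fin.last n) ((Z i).image Fin.castSucc) : Finset (Fin (n+1))) :
          Set (Fin (n+1))) ∧
      d = liftExp n (u i) + e} with hA
  have hAa : ∀ i d, d ∈ A i ↔ trunc n d ∈ a i := by
    intro i d
    constructor
    · rintro ⟨e, he, rfl⟩
      refine ⟨trunc n e, ?_, by rw [trunc_add, trunc_liftExp]⟩
      intro j hj
      have hj' : e j.castSucc ≠ 0 := by
        simpa [trunc_apply, Finsupp.mem_support_iff] using hj
      have hmem : (j.castSucc : Fin (n+1)) ∈ e.support := Finsupp.mem_support_iff.2 hj'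
      have h2 := he hmem
      simp only [Finset.coe_insert, Set.mem_insert_iff, Finset.coe_image, Set.mem_image,
        Finset.mem_coe] at h2
      rcases h2 with h | ⟨j', hj2, hjj⟩
      · exact absurd h (ne_of_lt (Fin.castSucc_lt_last j))
      · simpa [← Fin.castSucc_injective n hjj] using hj2
    · rintro ⟨e', he', hd⟩
      refine ⟨liftExp n e' + Finsupp.single (Fin.last n) (d (Fin.last n)), ?_, ?_⟩
      · intro j hj
        simp only [Finset.mem_coe] at hj
        have hj2 : liftExp n e' j ≠ 0 ∨
            (Finsupp.single (Fin.last n) (d (Fin.last n))) j ≠ 0 := by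
          by_contra hc
          push_neg at hc
          rw [Finsupp.mem_support_iff, Finsupp.add_apply, hc.1, hc.2] at hj
          exact hj rfl
        simp only [Finset.coe_insert, Set.mem_insert_iff, Finset.coe_image, Set.mem_image,
          Finset.mem_coe]
        induction j using Fin.lastCases with
        | last => left; rfl
        | cast i0 =>
            right
            rcases hj2 with h | h
            · rw [liftExp_castSucc] at h
              exact ⟨i0, he' (Finsupp.mem_support_iff.2 h), rfl⟩
            · exact absurd (Finsupp.single_eq_of_ne'
                (fun hh => absurd hh.symm (ne_of_lt (Fin.castSucc_lt_last i0)))) h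
      · rw [← add_assoc, ← liftExp_add, ← hd, lift_trunc]
  have ha_span : ∀ i, stanleySpace K (u i) (Z i) =
      Submodule.span K ((fun d' => monomial d' (1:K)) '' a i) :=
    fun i => stanleySpace_eq K _ _
  have hA_span : ∀ i, stanleySpace K (liftExp n (u i))
        (insert (Fin.last n) ((Z i).image Fin.castSucc)) =
      Submodule.span K ((fun d => monomial d (1:K)) '' A i) :=
    fun i => stanleySpace_eq K _ _
  have h2 : compSpan K I0 = Submodule.span K ((fun d => monomial d (1:K)) '' ⋃ i, a i) := by
    rw [← hdec0.2]
    simp only [ha_span]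
    rw [Set.image_iUnion, Submodule.span_iUnion]
  have hE : ∀ d' : Fin n →₀ ℕ, monomial d' (1:K) ∉ I0 ↔ ∃ i, d' ∈ a i := by
    intro d'
    have h1 : (monomial d' (1:K) ∉ I0) ↔ monomial d' (1:K) ∈ compSpan K I0 := by
      rw [compSpan_eq, monomial_mem_span_iff]
      exact Iff.rfl
    rw [h1, h2, monomial_mem_span_iff, Set.mem_iUnion]
  have hTA : {d : Fin (n+1) →₀ ℕ | monomial d (1:K) ∉ I} = ⋃ i, A i := by
    ext d
    simp only [Set.mem_setOf_eq, Set.mem_iUnion, L, hE]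
    exact exists_congr fun i => (hAa i d).symm
  have hb' : LinearIndependent K (fun s : Fin (n+1) →₀ ℕ => monomial s (1:K)) := by
    have hb := (basisMonomials (Fin (n+1)) K).linearIndependent
    rwa [coe_basisMonomials] at hb
  have pdis : ∀ i j, i ≠ j → ∀ d, d ∈ A i → d ∈ A j → False := by
    intro i j hij d hi hj
    have h1 : monomial (trunc n d) (1:K) ∈ stanleySpace K (u i) (Z i) := by
      obtain ⟨e, he, hd⟩ := (hAa i d).1 hi
      exact Submodule.subset_span ⟨e, he, by rw [hd]⟩
    have h2 : monomial (trunc n d) (1:K) ∈ stanleySpace K (u j) (Z j) := by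
      obtain ⟨e, he, hd⟩ := (hAa j d).1 hj
      exact Submodule.subset_span ⟨e, he, by rw [hd]⟩
    have hdisj := hdec0.1.pairwiseDisjoint hij
    have h0 := Submodule.disjoint_def.1 hdisj _ h1 h2
    rw [monomial_eq_zero] at h0
    exact one_ne_zero h0
  refine ⟨?_, ?_, ?_⟩
  · intro i
    constructor
    · intro j
      induction j using Fin.lastCases with
      | last => rw [liftExp_last]; omega
      | cast i0 => rw [liftExp_castSucc]; exact (hu i).1 i0
    · intro j hj
      rw [Finsupp.mem_support_iff] at hj
      induction j using Fin.lastCases with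
      | last => exact absurd (liftExp_last n (u i)) hj
      | cast i0 =>
          rw [liftExp_castSucc] at hj
          exact Finset.mem_insert_of_mem
            (Finset.mem_image_of_mem _ ((hu i).2 (Finsupp.mem_support_iff.2 hj)))
  · intro i
    dsimp only
    rw [hA_span i]
    have hrest : (⨆ j, ⨆ (_ : j ≠ i), stanleySpace K (liftExp n (u j))
          (insert (Fin.last n) ((Z j).image Fin.castSucc))) =
        Submodule.span K ((fun d => monomial d (1:K)) '' ⋃ j, ⋃ (_ : j ≠ i), A j) := by
      simp only [hA_span]
      rw [Set.image_iUnion, Submodule.span_iUnion]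
      refine iSup_congr fun j => ?_
      rw [Set.image_iUnion, Submodule.span_iUnion]
    rw [hrest]
    refine hb'.disjoint_span_image ?_
    rw [Set.disjoint_left]
    intro d hdi hdj
    rw [Set.mem_iUnion] at hdj
    obtain ⟨j, hj⟩ := hdj
    rw [Set.mem_iUnion] at hj
    obtain ⟨hji, hdj⟩ := hj
    exact pdis i j (Ne.symm hji) d hdi hdj
  · rw [compSpan_eq, hTA, Set.image_iUnion, Submodule.span_iUnion]
    exact iSup_congr hA_span
end
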